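/- Let A be a k×k complex matrix with no nonzero integer eigenvalue. Then Ker(exp(2πi·A) − I) = Ker(A). -/

import Mathlib

open Module

open scoped Nat Matrix

namespace KerExpAux

variable {𝔸 : Type*} [NormedRing 𝔸] [NormedAlgebra ℂ 𝔸] [CompleteSpace 𝔸]

lemma aux_summable (x : 𝔸) : Summable fun n : ℕ => (((n + 1)! : ℂ))⁻¹ • x ^ n := by
  rw [← summable_nat_add_iff 1]
  refine Summable.of_norm_bounded (g := fun n => ‖x‖ ^ (n + 1) / (n + 1)!)
    ((summable_nat_add_iff 1).2 (Real.summable_pow_div_factorial ‖x‖)) fun n => ?_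
  rw [norm_smul]
  have h1 : ‖x ^ (n + 1)‖ ≤ ‖x‖ ^ (n + 1) := norm_pow_le' x n.succ_pos
  have h2 : ‖(((n + 1 + 1)! : ℂ))⁻¹‖ ≤ (((n + 1)! : ℝ))⁻¹ := by
    rw [norm_inv, Complex.norm_natCast]
    refine inv_anti₀ (by positivity) ?_
    exact_mod_cast Nat.factorial_le (by omega)
  calc ‖(((n + 1 + 1)! : ℂ))⁻¹‖ * ‖x ^ (n + 1)‖
      ≤ (((n + 1)! : ℝ))⁻¹ * ‖x‖ ^ (n + 1) := by
        apply mul_le_mul h2 h1 (norm_nonneg _) (by positivity)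
    _ = ‖x‖ ^ (n + 1) / (n + 1)! := by ring

lemma exp_eq (x : 𝔸) :
    NormedSpace.exp x = 1 + x * ∑' n : ℕ, (((n + 1)! : ℂ))⁻¹ • x ^ n := by
  rw [NormedSpace.exp_eq_tsum ℂ]
  beta_reduce
  rw [Summable.tsum_eq_zero_add (NormedSpace.expSeries_summable' (𝕂 := ℂ) x)]
  congr 1
  · simp
  · rw [← (aux_summable x).tsum_mul_left x]
    congr 1
    funext n
    rw [mul_smul_comm, ← pow_succ']

lemma commute_tsum (x : 𝔸) :
    x * (∑' n : ℕ, (((n + 1)! : ℂ))⁻¹ • x ^ n)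
      = (∑' n : ℕ, (((n + 1)! : ℂ))⁻¹ • x ^ n) * x := by
  rw [← (aux_summable x).tsum_mul_left x, ← (aux_summable x).tsum_mul_right x]
  congr 1
  funext n
  rw [mul_smul_comm, smul_mul_assoc, ← pow_succ, ← pow_succ']

end KerExpAux

set_option maxHeartbeats 1000000 in
/-- Let `A` be a `k × k` complex matrix with no nonzero integer eigenvalue.
Then `Ker (exp (2πi • A) − I) = Ker A`. -/
theorem ker_exp_sub_one_eq_ker {k : ℕ} (A : Matrix (Fin k) (Fin k) ℂ)
    (hA : ∀ m : ℤ, m ≠ 0 → ¬ Module.End.HasEigenvalue A.mulVecLin (m : ℂ)) :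
    LinearMap.ker (NormedSpace.exp ((2 * Real.pi * Complex.I) • A) - 1).mulVecLin =
      LinearMap.ker A.mulVecLin := by
  letI : SeminormedRing (Matrix (Fin k) (Fin k) ℂ) := Matrix.linftyOpSemiNormedRing
  letI : NormedRing (Matrix (Fin k) (Fin k) ℂ) := Matrix.linftyOpNormedRing
  letI : NormedAlgebra ℂ (Matrix (Fin k) (Fin k) ℂ) := Matrix.linftyOpNormedAlgebra
  set c : ℂ := 2 * Real.pi * Complex.I with hc_def
  have hc : c ≠ 0 := Complex.two_pi_I_ne_zero
  set B : Matrix (Fin k) (Fin k) ℂ := c • A with hB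
  set h : Matrix (Fin k) (Fin k) ℂ := ∑' n : ℕ, (((n + 1)! : ℂ))⁻¹ • B ^ n with hh
  have hexp : NormedSpace.exp B = 1 + B * h := KerExpAux.exp_eq B
  have hBh : B * h = h * B := KerExpAux.commute_tsum B
  have key : ∀ x : Fin k → ℂ, (NormedSpace.exp B - 1) *ᵥ x = h *ᵥ (B *ᵥ x) := by
    intro x
    rw [Matrix.mulVec_mulVec, ← hBh, hexp, add_sub_cancel_left]
  -- injectivity of h
  have hKer : ∀ y : Fin k → ℂ, h *ᵥ y = 0 → y = 0 := by
    by_contra hcon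
    push_neg at hcon
    obtain ⟨y, hy, hy0⟩ := hcon
    have hyK : y ∈ LinearMap.ker h.mulVecLin := by
      simpa [LinearMap.mem_ker, Matrix.mulVecLin_apply] using hy
    haveI : Nontrivial (LinearMap.ker h.mulVecLin) :=
      ⟨⟨⟨y, hyK⟩, 0, fun hcontra => hy0 (by simpa using congrArg Subtype.val hcontra)⟩⟩
    have hmaps : ∀ x ∈ LinearMap.ker h.mulVecLin, B.mulVecLin x ∈ LinearMap.ker h.mulVecLin := by
      intro x hx
      rw [LinearMap.mem_ker, Matrix.mulVecLin_apply] at hx ⊢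
      rw [Matrix.mulVecLin_apply, Matrix.mulVec_mulVec, ← hBh, ← Matrix.mulVec_mulVec, hx,
        Matrix.mulVec_zero]
    let g := B.mulVecLin.restrict hmaps
    obtain ⟨ν, hν⟩ := Module.End.exists_eigenvalue g
    obtain ⟨v, hv⟩ := hν.exists_hasEigenvector
    have hv0' : (v : Fin k → ℂ) ≠ 0 := fun hz => hv.2 (Submodule.coe_eq_zero.mp hz)
    have hBv : B *ᵥ (v : Fin k → ℂ) = ν • (v : Fin k → ℂ) := by
      have h1 := congrArg Subtype.val hv.apply_eq_smul
      rw [LinearMap.restrict_coe_apply] at h1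
      simpa [Matrix.mulVecLin_apply] using h1
    have hpow : ∀ n : ℕ, B ^ n *ᵥ (v : Fin k → ℂ) = ν ^ n • (v : Fin k → ℂ) := by
      intro n
      induction n with
      | zero => simp [Matrix.one_mulVec]
      | succ n ih =>
        rw [pow_succ', ← Matrix.mulVec_mulVec, ih, Matrix.mulVec_smul, hBv, smul_smul,
          ← pow_succ]
    have hsummS : Summable fun n : ℕ => (((n + 1)! : ℂ))⁻¹ * ν ^ n := by
      simpa [smul_eq_mul] using KerExpAux.aux_summable (𝔸 := ℂ) ν
    have hvK : h *ᵥ (v : Fin k → ℂ) = 0 := by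
      have h5 := v.2
      rwa [LinearMap.mem_ker, Matrix.mulVecLin_apply] at h5
    have hhv : h *ᵥ (v : Fin k → ℂ) = (∑' n : ℕ, (((n + 1)! : ℂ))⁻¹ * ν ^ n) • (v : Fin k → ℂ) := by
      have h1 : h *ᵥ (v : Fin k → ℂ)
          = ∑' n : ℕ, (((n + 1)! : ℂ))⁻¹ • (B ^ n *ᵥ (v : Fin k → ℂ)) := by
        let ψmap : Matrix (Fin k) (Fin k) ℂ →ₗ[ℂ] (Fin k → ℂ) :=
          { toFun := fun M => M *ᵥ (v : Fin k → ℂ)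
            map_add' := fun M N => Matrix.add_mulVec M N (v : Fin k → ℂ)
            map_smul' := fun a M => Matrix.smul_mulVec a M (v : Fin k → ℂ) }
        have h2 := (LinearMap.toContinuousLinearMap ψmap).map_tsum (KerExpAux.aux_summable B)
        simp only [LinearMap.coe_toContinuousLinearMap', LinearMap.coe_mk, AddHom.coe_mk] at h2
        simpa [ψmap, Matrix.smul_mulVec, hh] using h2
      rw [h1]
      simp_rw [hpow, smul_smul]
      exact Summable.tsum_smul_const hsummS _
    have hS : (∑' n : ℕ, (((n + 1)! : ℂ))⁻¹ * ν ^ n) = 0 := by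
      rw [hvK] at hhv
      rcases smul_eq_zero.mp hhv.symm with hS | hv0
      · exact hS
      · exact absurd hv0 hv0'
    have hexpν : Complex.exp ν = 1 := by
      have h3 := KerExpAux.exp_eq (𝔸 := ℂ) ν
      rw [← Complex.exp_eq_exp_ℂ] at h3
      simpa [smul_eq_mul, hS] using h3
    have hν0 : ν ≠ 0 := by
      intro h0
      rw [h0] at hS
      have : (∑' n : ℕ, (((n + 1)! : ℂ))⁻¹ * (0 : ℂ) ^ n) = 1 := by
        rw [tsum_eq_single 0 (fun n hn => by simp [zero_pow hn])]
        simp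
      rw [this] at hS
      exact one_ne_zero hS
    obtain ⟨m, hm⟩ := Complex.exp_eq_one_iff.mp hexpν
    have hm0 : m ≠ 0 := by
      rintro rfl
      simp at hm
      exact hν0 hm
    refine hA m hm0 ?_
    refine Module.End.hasEigenvalue_of_hasEigenvector ⟨?_, hv0'⟩
    rw [Module.End.mem_eigenspace_iff, Matrix.mulVecLin_apply]
    have h4 : c • (A *ᵥ (v : Fin k → ℂ)) = c • ((m : ℂ) • (v : Fin k → ℂ)) := by
      rw [← Matrix.smul_mulVec, ← hB, hBv, hm, smul_smul]
      congr 1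
      rw [← hc_def]
      ring
    exact smul_right_injective (Fin k → ℂ) hc h4
  ext x
  simp only [LinearMap.mem_ker, Matrix.mulVecLin_apply]
  constructor
  · intro hx
    rw [key] at hx
    have hBx : B *ᵥ x = 0 := hKer _ hx
    rw [hB, Matrix.smul_mulVec] at hBx
    exact (smul_eq_zero.mp hBx).resolve_left hc
  · intro hx
    rw [key, hB, Matrix.smul_mulVec, hx, smul_zero, Matrix.mulVec_zero]
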